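/- Let F be a cdf on Θ = [θ̲, θ̄] with density f, and t a binary test with π_t : Θ → (0,1) increasing, 0 < ∫π_t dF < 1. For μ ∈ [0, (1−π_t(θ̄))/(1−π̄_t)) and λ ∈ [0,1], define π_d(θ) = (λπ̄_t + (1−λ)π_t(θ)) / ((1−μ)(1−λ(1−π̄_t)) + μπ̄_t), where π̄_t = ∫π_t dF. Then π_d(θ) ∈ [0,1] for all θ, π_d is increasing, and t is more difficult than d. -/
import Mathlib


open Set MeasureTheory

/-- The mixed test `πd(θ) = (λπ̄t + (1−λ)πt(θ)) / ((1−m)(1−λ(1−π̄t)) + mπ̄t)` is a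
well-defined monotone test that is easier than `t`. -/
theorem stmt_15 (lo hi : ℝ) (hlohi : lo < hi) (P : Measure ℝ) [IsProbabilityMeasure P]
    (hsupp : P (Icc lo hi) = 1)
    (πt πd : ℝ → ℝ)
    (hrt : ∀ θ ∈ Icc lo hi, πt θ ∈ Ioo (0:ℝ) 1)
    (hmono : ∀ θ ∈ Icc lo hi, ∀ θ' ∈ Icc lo hi, θ ≤ θ' → πt θ ≤ πt θ')
    (hint : Integrable πt P)
    (pbar : ℝ) (hpbar : pbar = ∫ θ, πt θ ∂P) (hp : pbar ∈ Ioo (0:ℝ) 1)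
    (m lam : ℝ) (hm : 0 ≤ m) (hm' : m < (1 - πt hi) / (1 - pbar))
    (hlam : lam ∈ Icc (0:ℝ) 1)
    (hdef : ∀ θ, πd θ = (lam * pbar + (1 - lam) * πt θ) /
      ((1 - m) * (1 - lam * (1 - pbar)) + m * pbar)) :
    (∀ θ ∈ Icc lo hi, πd θ ∈ Icc (0:ℝ) 1) ∧
    (∀ θ ∈ Icc lo hi, ∀ θ' ∈ Icc lo hi, θ ≤ θ' → πd θ ≤ πd θ') ∧
    (∀ θ ∈ Icc lo hi, ∀ θ' ∈ Icc lo hi, θ' < θ →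
      πt θ * πd θ' ≥ πd θ * πt θ' ∧
      (1 - πt θ) * (1 - πd θ') ≥ (1 - πd θ) * (1 - πt θ')) := by

  obtain ⟨hp0, hp1⟩ := hp
  obtain ⟨hl0, hl1⟩ := hlam
  have hhi : hi ∈ Icc lo hi := ⟨hlohi.le, le_rfl⟩
  have hth1 : πt hi < 1 := (hrt hi hhi).2
  -- pbar ≤ πt hi
  have hae : ∀ᵐ θ ∂P, πt θ ≤ πt hi := by
    have hc : P (Icc lo hi)ᶜ = 0 := by
      rw [measure_compl measurableSet_Icc (measure_ne_top _ _), hsupp, measure_univ]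
      simp
    filter_upwards [measure_eq_zero_iff_ae_notMem.mp hc] with θ hθ
    exact hmono θ (not_not.mp hθ) hi hhi (not_not.mp hθ).2
  have hpb : pbar ≤ πt hi := by
    rw [hpbar]
    calc ∫ θ, πt θ ∂P ≤ ∫ _, πt hi ∂P := integral_mono_ae hint (integrable_const _) hae
    _ = πt hi := by simp
  have hmlt : m * (1 - pbar) < 1 - πt hi := by
    have := (lt_div_iff₀ (by linarith : (0:ℝ) < 1 - pbar)).mp hm'
    linarith
  have hm1 : m < 1 := by nlinarith
  set D : ℝ := (1 - m) * (1 - lam * (1 - pbar)) + m * pbar with hDdef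
  have hD : 0 < D := by nlinarith [mul_le_of_le_one_left (by linarith : (0:ℝ) ≤ 1 - pbar) hl1]
  have hND : ∀ θ ∈ Icc lo hi, lam * pbar + (1 - lam) * πt θ ≤ D := by
    intro θ hθ
    have h1 : πt θ ≤ πt hi := hmono θ hθ hi hhi hθ.2
    nlinarith [mul_nonneg (by linarith : (0:ℝ) ≤ 1 - lam) (by linarith : (0:ℝ) ≤ 1 - πt hi - m * (1 - pbar))]
  have hN0 : ∀ θ ∈ Icc lo hi, 0 < lam * pbar + (1 - lam) * πt θ := by
    intro θ hθ
    have h0 : 0 < πt θ := (hrt θ hθ).1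
    rcases eq_or_lt_of_le hl1 with h | h
    · rw [h]; nlinarith
    · nlinarith
  refine ⟨?_, ?_, ?_⟩
  · intro θ hθ
    rw [hdef]
    exact ⟨le_of_lt (div_pos (hN0 θ hθ) hD), div_le_one_of_le₀ (hND θ hθ) hD.le⟩
  · intro θ hθ θ' hθ' hle
    rw [hdef, hdef]
    rw [div_le_div_iff₀ hD hD]
    have h2 : πt θ ≤ πt θ' := hmono θ hθ θ' hθ' hle
    nlinarith [mul_nonneg (by linarith : (0:ℝ) ≤ 1 - lam) (by linarith : (0:ℝ) ≤ πt θ' - πt θ)]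
  · intro θ hθ θ' hθ' hlt
    have h1 : πt θ' ≤ πt θ := hmono θ' hθ' θ hθ hlt.le
    have ht0 : 0 < πt θ' := (hrt θ' hθ').1
    have ht1 : πt θ < 1 := (hrt θ hθ).2
    rw [hdef, hdef]
    constructor
    · rw [ge_iff_le, div_mul_eq_mul_div, mul_div_assoc, ← mul_div_assoc, ← mul_div_assoc,
        div_le_div_iff₀ hD hD]
      have hid : πt θ * (lam * pbar + (1 - lam) * πt θ') -
          (lam * pbar + (1 - lam) * πt θ) * πt θ' = lam * pbar * (πt θ - πt θ') := by ring
      have hnn := mul_nonneg (mul_nonneg hl0 hp0.le) (sub_nonneg.mpr h1)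
      exact mul_le_mul_of_nonneg_right (by linarith) hD.le
    · rw [ge_iff_le]
      have e1 : 1 - (lam * pbar + (1 - lam) * πt θ) / D = (D - (lam * pbar + (1 - lam) * πt θ)) / D := by
        field_simp
      have e2 : 1 - (lam * pbar + (1 - lam) * πt θ') / D = (D - (lam * pbar + (1 - lam) * πt θ')) / D := by
        field_simp
      rw [e1, e2, div_mul_eq_mul_div, mul_div_assoc, ← mul_div_assoc, ← mul_div_assoc,
        div_le_div_iff₀ hD hD]
      have key : 0 ≤ m * (1 - pbar) * (1 - lam) :=
        mul_nonneg (mul_nonneg hm (by linarith)) (by linarith)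
      have hid : (1 - πt θ) * (D - (lam * pbar + (1 - lam) * πt θ')) -
          (D - (lam * pbar + (1 - lam) * πt θ)) * (1 - πt θ') =
          (πt θ - πt θ') * (m * (1 - pbar) * (1 - lam)) := by rw [hDdef]; ring
      have hnn := mul_nonneg (sub_nonneg.mpr h1) key
      exact mul_le_mul_of_nonneg_right (by linarith) hD.le
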